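/- Let s be a nonzero complex number, γ = s², N₁ a positive integer, and define R̂_{v,j} = s^{v+j-2} · Σ_{k=1}^{min(v,j)} C(v-1,k-1)·C(j-1,k-1)·(1 - 1/γ)^{k-1} for positive integers v, j. Then for every positive integer j: (1 − γ) · Σ_{k=1}^{N₁} s^{N₁-k} · R̂_{k,j} = R̂_{N₁,j} − s·R̂_{N₁,j+1}. -/

import Mathlib

/-- The entry `R̂_{v,j}` (for `1 ≤ v, j`), where
`R̂_{v,j} = s^{v+j-2} · Σ_{k=1}^{min(v,j)} C(v-1,k-1)·C(j-1,k-1)·(1 - 1/s²)^{k-1}`. -/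
noncomputable def Rhat (s : ℂ) (v j : ℕ) : ℂ :=
  s ^ (v + j - 2) *
    ∑ k ∈ Finset.range (min v j),
      (Nat.choose (v - 1) k : ℂ) * (Nat.choose (j - 1) k : ℂ) * (1 - 1 / s ^ 2) ^ k

lemma sum_key (x : ℂ) (m i : ℕ) (M : ℕ) :
    (∑ k ∈ Finset.range (M+1), (m.choose k : ℂ) * ((i+1).choose k : ℂ) * x ^ k)
    + (∑ k ∈ Finset.range (M+1), ((m+1).choose k : ℂ) * (i.choose k : ℂ) * x ^ k)
    - (∑ k ∈ Finset.range (M+1), ((m+1).choose k : ℂ) * ((i+1).choose k : ℂ) * x ^ k)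
    = (1 - x) * ∑ k ∈ Finset.range (M+1), (m.choose k : ℂ) * (i.choose k : ℂ) * x ^ k
      + (m.choose M : ℂ) * (i.choose M : ℂ) * x ^ (M+1) := by
  induction M with
  | zero => simp [Finset.sum_range_one]
  | succ M ih =>
    simp only [Finset.sum_range_succ, Nat.succ_eq_add_one] at ih ⊢
    rw [Nat.choose_succ_succ m M, Nat.choose_succ_succ i M]
    push_cast at ih ⊢
    linear_combination ih

lemma Rhat_eq (s : ℂ) (m i M : ℕ) (hM : min (m+1) (i+1) ≤ M) :
    Rhat s (m+1) (i+1) =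
      s ^ (m+i) * ∑ k ∈ Finset.range M,
        (m.choose k : ℂ) * (i.choose k : ℂ) * (1 - 1/s^2) ^ k := by
  rw [Rhat, show (m+1)+(i+1)-2 = m+i by omega]
  congr 1
  simp only [Nat.add_sub_cancel]
  apply Finset.sum_subset (Finset.range_subset_range.2 hM)
  intro k _ hk2
  simp only [Finset.mem_range, not_lt] at hk2
  rcases min_le_iff.1 hk2 with h | h
  · rw [Nat.choose_eq_zero_of_lt (by omega : m < k)]; simp
  · rw [Nat.choose_eq_zero_of_lt (by omega : i < k)]; simp

lemma Rhat_one (s : ℂ) (i : ℕ) : Rhat s 1 (i+1) = s ^ i := by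
  rw [Rhat, show 1+(i+1)-2 = i by omega, show min 1 (i+1) = 1 by omega]
  simp [Finset.sum_range_one]

lemma keyR (s : ℂ) (hs : s ≠ 0) (m i : ℕ) :
    s * Rhat s (m+1) (i+1) + s * Rhat s (m+1+1) (i+1+1) =
    s^2 * Rhat s (m+1) (i+1+1) + s^2 * Rhat s (m+1+1) (i+1) := by
  rw [Rhat_eq s m i (m+i+1+1) (by omega),
      Rhat_eq s (m+1) (i+1) (m+i+1+1) (by omega),
      Rhat_eq s m (i+1) (m+i+1+1) (by omega),
      Rhat_eq s (m+1) i (m+i+1+1) (by omega)]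
  set x := 1 - 1/s^2 with hxdef
  have hsx : s^2 * (1 - x) = 1 := by
    rw [hxdef]; field_simp; ring
  have h1 := sum_key x m i (m+i+1)
  have hz : (m.choose (m+i+1) : ℂ) = 0 := by
    rw [Nat.choose_eq_zero_of_lt (by omega)]; norm_num
  rw [hz, zero_mul, zero_mul, add_zero] at h1
  set SA := ∑ k ∈ Finset.range (m+i+1+1), (m.choose k : ℂ) * (i.choose k : ℂ) * x ^ k with hSA
  set SB := ∑ k ∈ Finset.range (m+i+1+1), (m.choose k : ℂ) * ((i+1).choose k : ℂ) * x ^ k with hSB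
  set SC := ∑ k ∈ Finset.range (m+i+1+1), ((m+1).choose k : ℂ) * (i.choose k : ℂ) * x ^ k with hSC
  set SD := ∑ k ∈ Finset.range (m+i+1+1), ((m+1).choose k : ℂ) * ((i+1).choose k : ℂ) * x ^ k with hSD
  linear_combination (-(s^2) * s^(m+i+1)) * h1 - (s^(m+i+1) * SA) * hsx

theorem Rhat_weighted_column_sum (s : ℂ) (hs : s ≠ 0) (N₁ : ℕ) (hN₁ : 0 < N₁)
    (j : ℕ) (hj : 0 < j) :
    (1 - s ^ 2) * ∑ k ∈ Finset.Icc 1 N₁, s ^ (N₁ - k) * Rhat s k j =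
      Rhat s N₁ j - s * Rhat s N₁ (j + 1) := by
  obtain ⟨i, rfl⟩ : ∃ i, j = i + 1 := ⟨j - 1, by omega⟩
  induction N₁, hN₁ using Nat.le_induction with
  | base =>
    rw [Finset.Icc_self, Finset.sum_singleton, Rhat_one s i, Rhat_one s (i+1)]
    norm_num
    ring
  | succ N hN ih =>
    rw [Finset.sum_Icc_succ_top (by omega : (1:ℕ) ≤ N+1)]
    have hsum : ∑ k ∈ Finset.Icc 1 N, s ^ (N+1-k) * Rhat s k (i+1)
        = s * ∑ k ∈ Finset.Icc 1 N, s ^ (N-k) * Rhat s k (i+1) := by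
      rw [Finset.mul_sum]
      apply Finset.sum_congr rfl
      intro k hk
      rw [Finset.mem_Icc] at hk
      rw [show N+1-k = (N-k)+1 by omega, pow_succ]
      ring
    rw [hsum]
    simp only [Nat.sub_self, pow_zero, one_mul]
    obtain ⟨m, rfl⟩ : ∃ m, N = m + 1 := ⟨N - 1, by omega⟩
    have hk := keyR s hs m i
    linear_combination s * ih + hk
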